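/- arXiv:2105.07262 — 2 statements merged into one kernel-verified Lean document; each statement's English description precedes it below -/
import Mathlib

section
/- Let h, f ∈ ℝ⟦X⟧ have constant coefficient 0 and nonzero linear coefficient, with compositional inverses h̄, f̄ (series with constant coefficient 0 satisfying h∘h̄ = h̄∘h = X and f∘f̄ = f̄∘f = X), and let A_h, A_f ∈ ℝ⟦X⟧ satisfy h̄·A_h = X and f̄·A_f = X. Then h∘f = X and f∘h = X if and only if A_f · (A_h ∘ (X·A_f⁻¹)) = 1 and A_h · (A_f ∘ (X·A_h⁻¹)) = 1. -/
open PowerSeries Finset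

noncomputable def psComp (g f : PowerSeries ℝ) : PowerSeries ℝ :=
  PowerSeries.mk fun n => ∑ k ∈ Finset.range (n + 1),
    PowerSeries.coeff k g * PowerSeries.coeff n (f ^ k)

lemma coeff_psComp (g c : PowerSeries ℝ) (n : ℕ) :
    coeff n (psComp g c) = ∑ k ∈ range (n + 1), coeff k g * coeff n (c ^ k) := by
  simp [psComp]

lemma coeff_pow_eq_zero {c : PowerSeries ℝ} (hc : constantCoeff c = 0)
    {n k : ℕ} (hnk : n < k) : coeff n (c ^ k) = 0 := by
  have hX : (X : PowerSeries ℝ) ^ k ∣ c ^ k := pow_dvd_pow_of_dvd (X_dvd_iff.2 hc) k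
  exact (X_pow_dvd_iff.1 hX) n hnk

lemma coeff_pow_self {c : PowerSeries ℝ} (hc : constantCoeff c = 0) (n : ℕ) :
    coeff n (c ^ n) = (coeff 1 c) ^ n := by
  induction n with
  | zero => simp
  | succ n ih =>
    rw [pow_succ, coeff_mul]
    rw [Finset.sum_eq_single (n, 1)]
    · simp [ih, pow_succ]
    · rintro ⟨i, j⟩ hmem hne
      rw [Finset.HasAntidiagonal.mem_antidiagonal] at hmem
      rcases lt_trichotomy i n with hlt | heq | hgt
      · have : n < i + 1 → False := by omega
        have : i < n := hlt
        rw [coeff_pow_eq_zero hc this, zero_mul]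
      · exfalso; apply hne; simp [heq]; omega
      · have hj : j = 0 := by omega
        subst hj
        simp only [coeff_zero_eq_constantCoeff, hc, mul_zero]
    · intro hmem
      exfalso; apply hmem; rw [Finset.HasAntidiagonal.mem_antidiagonal]

lemma coeff_psComp_of_le {c : PowerSeries ℝ} (hc : constantCoeff c = 0)
    (g : PowerSeries ℝ) {n m : ℕ} (hm : n + 1 ≤ m) :
    coeff n (psComp g c) = ∑ k ∈ range m, coeff k g * coeff n (c ^ k) := by
  rw [coeff_psComp]
  apply Finset.sum_subset (Finset.range_subset_range.2 hm)
  intro k _ hk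
  rw [Finset.mem_range, not_lt] at hk
  rw [coeff_pow_eq_zero hc (by omega), mul_zero]

lemma psComp_X {c : PowerSeries ℝ} (hc : constantCoeff c = 0) :
    psComp X c = c := by
  ext n
  rw [coeff_psComp]
  rcases Nat.eq_zero_or_pos n with rfl | hn
  · simpa using hc.symm
  · rw [Finset.sum_eq_single 1]
    · simp
    · intro k _ hk
      rw [coeff_X, if_neg hk, zero_mul]
    · intro hmem
      exfalso; apply hmem; rw [Finset.mem_range]; omega

lemma psComp_one (c : PowerSeries ℝ) : psComp 1 c = 1 := by
  ext n
  rw [coeff_psComp, Finset.sum_eq_single 0]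
  · simp
  · intro k _ hk
    rw [coeff_one, if_neg hk, zero_mul]
  · intro hmem
    exfalso; apply hmem; rw [Finset.mem_range]; omega

lemma psComp_sub (a b c : PowerSeries ℝ) :
    psComp (a - b) c = psComp a c - psComp b c := by
  ext n
  simp [coeff_psComp, sub_mul, Finset.sum_sub_distrib]

lemma psComp_injective {c : PowerSeries ℝ} (hc0 : constantCoeff c = 0)
    (hc1 : coeff 1 c ≠ 0) {a b : PowerSeries ℝ}
    (hab : psComp a c = psComp b c) : a = b := by
  have hd : psComp (a - b) c = 0 := by rw [psComp_sub, hab, sub_self]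
  have key : ∀ n, coeff n (a - b) = 0 := by
    intro n
    induction n using Nat.strong_induction_on with
    | _ n ih =>
      have h0 : coeff n (psComp (a - b) c) = 0 := by rw [hd]; simp
      rw [coeff_psComp, Finset.sum_range_succ] at h0
      have hz : ∑ k ∈ range n, coeff k (a - b) * coeff n (c ^ k) = 0 := by
        apply Finset.sum_eq_zero
        intro k hk
        rw [ih k (Finset.mem_range.1 hk), zero_mul]
      rw [hz, zero_add, coeff_pow_self hc0] at h0
      exact (mul_eq_zero.1 h0).resolve_right (pow_ne_zero n hc1)
  have : a - b = 0 := by ext n; simpa using key n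
  exact sub_eq_zero.1 this

lemma psComp_mul {c : PowerSeries ℝ} (hc : constantCoeff c = 0) (a b : PowerSeries ℝ) :
    psComp (a * b) c = psComp a c * psComp b c := by
  ext n
  rw [coeff_psComp, coeff_mul]
  have hRHS : ∀ q ∈ antidiagonal n,
      coeff q.1 (psComp a c) * coeff q.2 (psComp b c)
        = ∑ i ∈ range (n+1), ∑ j ∈ range (n+1),
            coeff i a * coeff j b * (coeff q.1 (c ^ i) * coeff q.2 (c ^ j)) := by
    intro q hq
    rw [Finset.HasAntidiagonal.mem_antidiagonal] at hq
    rw [coeff_psComp_of_le hc a (m := n+1) (by omega),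
        coeff_psComp_of_le hc b (m := n+1) (by omega), Finset.sum_mul_sum]
    apply Finset.sum_congr rfl; intro i _
    apply Finset.sum_congr rfl; intro j _
    ring
  rw [Finset.sum_congr rfl hRHS, Finset.sum_comm]
  have step : ∀ i ∈ range (n+1),
      (∑ q ∈ antidiagonal n, ∑ j ∈ range (n+1),
        coeff i a * coeff j b * (coeff q.1 (c ^ i) * coeff q.2 (c ^ j)))
      = ∑ j ∈ range (n+1), coeff i a * coeff j b * coeff n (c ^ (i + j)) := by
    intro i _
    rw [Finset.sum_comm]
    apply Finset.sum_congr rfl; intro j _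
    rw [← Finset.mul_sum, ← coeff_mul, ← pow_add]
  rw [Finset.sum_congr rfl step]
  -- LHS: triangle sum
  have hL : ∀ k ∈ range (n+1), coeff k (a * b) * coeff n (c ^ k)
      = ∑ p ∈ antidiagonal k, coeff p.1 a * coeff p.2 b * coeff n (c ^ (p.1 + p.2)) := by
    intro k _
    rw [coeff_mul, Finset.sum_mul]
    apply Finset.sum_congr rfl
    intro p hp
    rw [Finset.HasAntidiagonal.mem_antidiagonal] at hp
    rw [hp]
  rw [Finset.sum_congr rfl hL]
  -- now: ∑ k ∈ range (n+1), ∑ p ∈ antidiagonal k, F p = ∑ i ∑ j, F (i,j)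
  have hdisj : (↑(range (n+1)) : Set ℕ).PairwiseDisjoint (antidiagonal : ℕ → Finset (ℕ × ℕ)) := by
    intro x _ y _ hxy
    simp only [Finset.disjoint_left]
    rintro p hx hy
    rw [Finset.HasAntidiagonal.mem_antidiagonal] at hx hy
    exact hxy (hx ▸ hy ▸ rfl)
  rw [← Finset.sum_biUnion hdisj, ← Finset.sum_product']
  apply Finset.sum_subset
  · rintro ⟨i, j⟩ hp
    rw [Finset.mem_biUnion] at hp
    obtain ⟨k, hk, hpk⟩ := hp
    rw [Finset.HasAntidiagonal.mem_antidiagonal] at hpk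
    rw [Finset.mem_range] at hk
    rw [Finset.mem_product, Finset.mem_range, Finset.mem_range]
    omega
  · rintro ⟨i, j⟩ hp hnp
    rw [Finset.mem_biUnion] at hnp
    have : n < i + j := by
      by_contra hle
      exact hnp ⟨i + j, Finset.mem_range.2 (by omega), Finset.HasAntidiagonal.mem_antidiagonal.2 rfl⟩
    rw [coeff_pow_eq_zero hc this, mul_zero]

lemma coeff_one_psComp (g c : PowerSeries ℝ) :
    coeff 1 (psComp g c) = coeff 1 g * coeff 1 c := by
  rw [coeff_psComp]
  simp [Finset.sum_range_succ]

theorem stmt2 (h f hbar fbar Ah Af : PowerSeries ℝ)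
    (hh0 : constantCoeff h = 0) (hh1 : coeff 1 h ≠ 0)
    (hf0 : constantCoeff f = 0) (hf1 : coeff 1 f ≠ 0)
    (hhb0 : constantCoeff hbar = 0) (hfb0 : constantCoeff fbar = 0)
    (hhb1 : psComp h hbar = X) (hhb2 : psComp hbar h = X)
    (hfb1 : psComp f fbar = X) (hfb2 : psComp fbar f = X)
    (hAh : hbar * Ah = X) (hAf : fbar * Af = X) :
    (psComp h f = X ∧ psComp f h = X) ↔
      (Af * psComp Ah (X * Af⁻¹) = 1 ∧ Ah * psComp Af (X * Ah⁻¹) = 1) := by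
  have hXne : (X : PowerSeries ℝ) ≠ 0 := X_ne_zero
  have hbar1 : coeff 1 hbar ≠ 0 := by
    intro h0
    have := congrArg (coeff 1) hhb2
    rw [coeff_one_psComp, h0, zero_mul, coeff_one_X] at this
    exact one_ne_zero this.symm
  have fbar1 : coeff 1 fbar ≠ 0 := by
    intro h0
    have := congrArg (coeff 1) hfb2
    rw [coeff_one_psComp, h0, zero_mul, coeff_one_X] at this
    exact one_ne_zero this.symm
  have hAf0 : constantCoeff Af ≠ 0 := by
    intro h0
    have := congrArg (coeff 1) hAf
    rw [coeff_one_mul, hfb0, h0, coeff_one_X] at this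
    simp at this
  have hAh0 : constantCoeff Ah ≠ 0 := by
    intro h0
    have := congrArg (coeff 1) hAh
    rw [coeff_one_mul, hhb0, h0, coeff_one_X] at this
    simp at this
  have XAfinv : X * Af⁻¹ = fbar := by
    rw [← hAf, mul_assoc, PowerSeries.mul_inv_cancel Af hAf0, mul_one]
  have XAhinv : X * Ah⁻¹ = hbar := by
    rw [← hAh, mul_assoc, PowerSeries.mul_inv_cancel Ah hAh0, mul_one]
  rw [XAfinv, XAhinv]
  constructor
  · rintro ⟨H1, H2⟩
    -- fbar = h
    have hfbh : fbar = h := psComp_injective hf0 hf1 (hfb2.trans H1.symm)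
    -- f = hbar
    have hfhb : f = hbar := psComp_injective hh0 hh1 (H2.trans hhb2.symm)
    constructor
    · -- Af * psComp Ah fbar = 1
      have key : X * psComp Ah fbar = fbar := by
        calc X * psComp Ah fbar = psComp hbar fbar * psComp Ah fbar := by
              rw [← hfhb, hfb1]
          _ = psComp (hbar * Ah) fbar := (psComp_mul hfb0 _ _).symm
          _ = fbar := by rw [hAh, psComp_X hfb0]
      apply mul_left_cancel₀ hXne
      calc X * (Af * psComp Ah fbar) = Af * (X * psComp Ah fbar) := by ring
        _ = Af * fbar := by rw [key]
        _ = X := by rw [mul_comm, hAf]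
        _ = X * 1 := (mul_one X).symm
    · have key : X * psComp Af hbar = hbar := by
        calc X * psComp Af hbar = psComp fbar hbar * psComp Af hbar := by
              rw [hfbh, hhb1]
          _ = psComp (fbar * Af) hbar := (psComp_mul hhb0 _ _).symm
          _ = hbar := by rw [hAf, psComp_X hhb0]
      apply mul_left_cancel₀ hXne
      calc X * (Ah * psComp Af hbar) = Ah * (X * psComp Af hbar) := by ring
        _ = Ah * hbar := by rw [key]
        _ = X := by rw [mul_comm, hAh]
        _ = X * 1 := (mul_one X).symm
  · rintro ⟨G1, G2⟩
    have star : psComp hbar fbar * psComp Ah fbar = fbar := by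
      rw [← psComp_mul hfb0, hAh, psComp_X hfb0]
    have hbf : psComp hbar fbar = X := by
      calc psComp hbar fbar = psComp hbar fbar * (Af * psComp Ah fbar) := by
            rw [G1, mul_one]
        _ = Af * (psComp hbar fbar * psComp Ah fbar) := by ring
        _ = Af * fbar := by rw [star]
        _ = X := by rw [mul_comm, hAf]
    have hbeqf : hbar = f := psComp_injective hfb0 fbar1 (hbf.trans hfb1.symm)
    exact ⟨by rw [← hbeqf, hhb1], by rw [← hbeqf, hhb2]⟩
end

section
/- Let H ∈ ℝ⟦X⟧ have constant coefficient 1 and set h = X·H; suppose h ≠ X. Let f, g ∈ ℝ⟦X⟧ where f has constant coefficient 0 and nonzero linear coefficient, and g has nonzero constant coefficient. If f∘h = h∘f and g·(H∘f) = H·(g∘h), then there exists a nonzero c ∈ ℝ such that X·g = c·f. -/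
open PowerSeries

lemma psComp_coeff (g f : PowerSeries ℝ) (n : ℕ) :
    coeff n (psComp g f) = ∑ k ∈ Finset.range (n + 1),
      coeff k g * coeff n (f ^ k) := by
  simp [psComp]

lemma coeff_pow_eq_zero_s12 {b : PowerSeries ℝ} (hb : constantCoeff b = 0)
    {q k : ℕ} (h : q < k) : coeff q (b ^ k) = 0 := by
  have hdvd : (X : PowerSeries ℝ) ^ k ∣ b ^ k :=
    pow_dvd_pow_of_dvd (PowerSeries.X_dvd_iff.mpr hb) k
  exact (PowerSeries.X_pow_dvd_iff.mp hdvd) q h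

lemma psComp_X_mul (a b : PowerSeries ℝ) (hb : constantCoeff b = 0) :
    psComp (X * a) b = b * psComp a b := by
  ext n
  rw [coeff_mul, psComp_coeff, Finset.sum_range_succ']
  have h0 : coeff 0 (X * a) * coeff n (b ^ 0) = 0 := by
    simp [coeff_zero_eq_constantCoeff]
  rw [h0, add_zero]
  have hstep : ∀ i ∈ Finset.range n,
      coeff (i + 1) (X * a) * coeff n (b ^ (i + 1)) =
      ∑ pq ∈ Finset.HasAntidiagonal.antidiagonal n,
        coeff pq.1 b * (coeff i a * coeff pq.2 (b ^ i)) := by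
    intro i _
    rw [coeff_succ_X_mul, pow_succ', coeff_mul, Finset.mul_sum]
    apply Finset.sum_congr rfl
    intro pq _
    ring
  rw [Finset.sum_congr rfl hstep, Finset.sum_comm]
  apply Finset.sum_congr rfl
  rintro ⟨p, q⟩ hpq
  simp only [Finset.HasAntidiagonal.mem_antidiagonal] at hpq
  rw [psComp_coeff, Finset.mul_sum]
  rcases Nat.eq_zero_or_pos p with hp | hp
  · subst hp
    simp [coeff_zero_eq_constantCoeff, hb]
  · have hq : q + 1 ≤ n := by omega
    rw [← Finset.sum_subset (Finset.range_subset_range.mpr hq)]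
    intro k _ hk
    simp only [Finset.mem_range, not_lt] at hk
    rw [coeff_pow_eq_zero_s12 hb (by omega), mul_zero, mul_zero]

lemma coeff_pow_lt (H : PowerSeries ℝ) (m : ℕ)
    (hm : ∀ s, 0 < s → s < m → coeff s H = 0) (k : ℕ) :
    ∀ s, 0 < s → s < m → coeff s (H ^ k) = 0 := by
  induction k with
  | zero => intro s hs _; simp [coeff_one, hs.ne']
  | succ k ih =>
    intro s hs hsm
    rw [pow_succ, coeff_mul]
    apply Finset.sum_eq_zero
    rintro ⟨p, q⟩ hpq
    simp only [Finset.HasAntidiagonal.mem_antidiagonal] at hpq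
    rcases Nat.eq_zero_or_pos q with hq | hq
    · have hp : p = s := by omega
      subst hq
      rw [hp, ih s hs hsm, zero_mul]
    · rw [hm q hq (by omega), mul_zero]

lemma coeff_pow_m (H : PowerSeries ℝ) (hH0 : constantCoeff H = 1) (m : ℕ) (hm0 : 0 < m)
    (hm : ∀ s, 0 < s → s < m → coeff s H = 0) (k : ℕ) :
    coeff m (H ^ k) = (k : ℝ) * coeff m H := by
  induction k with
  | zero => simp [coeff_one, hm0.ne']
  | succ k ih =>
    rw [pow_succ, coeff_mul, Finset.Nat.sum_antidiagonal_eq_sum_range_succ_mk,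
      Finset.sum_range_succ]
    obtain ⟨m', rfl⟩ : ∃ m', m = m' + 1 := ⟨m - 1, by omega⟩
    rw [Finset.sum_range_succ']
    have hmid : ∑ i ∈ Finset.range m',
        coeff (i + 1) (H ^ k) * coeff (m' + 1 - (i + 1)) H = 0 := by
      apply Finset.sum_eq_zero
      intro i hi
      simp only [Finset.mem_range] at hi
      rw [hm (m' + 1 - (i + 1)) (by omega) (by omega), mul_zero]
    have h00 : coeff 0 (H ^ k) = 1 := by
      rw [coeff_zero_eq_constantCoeff, map_pow, hH0, one_pow]
    rw [hmid, h00]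
    simp only [Nat.sub_self, coeff_zero_eq_constantCoeff, hH0]
    rw [ih]
    push_cast
    ring

lemma coeff_pow_self_s12 (f : PowerSeries ℝ) (hf0 : constantCoeff f = 0) (k : ℕ) :
    coeff k (f ^ k) = (coeff 1 f) ^ k := by
  induction k with
  | zero => simp
  | succ k ih =>
    rw [pow_succ, coeff_mul, Finset.Nat.sum_antidiagonal_eq_sum_range_succ_mk,
      Finset.sum_range_succ, Finset.sum_range_succ]
    have hlow : ∑ p ∈ Finset.range k, coeff p (f ^ k) * coeff (k + 1 - p) f = 0 := by
      apply Finset.sum_eq_zero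
      intro p hp
      simp only [Finset.mem_range] at hp
      rw [coeff_pow_eq_zero_s12 hf0 hp, zero_mul]
    rw [hlow, ih]
    simp only [Nat.add_sub_cancel_left, Nat.sub_self, coeff_zero_eq_constantCoeff, hf0,
      mul_zero, add_zero, zero_add]
    rw [pow_succ]

lemma psComp_coeff_zero (H f : PowerSeries ℝ) (hH0 : constantCoeff H = 1) :
    coeff 0 (psComp H f) = 1 := by
  rw [psComp_coeff]
  simp [coeff_zero_eq_constantCoeff, hH0]

lemma psComp_coeff_lt (H f : PowerSeries ℝ) (m : ℕ)
    (hm : ∀ s, 0 < s → s < m → coeff s H = 0)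
    (s : ℕ) (hs : 0 < s) (hsm : s < m) : coeff s (psComp H f) = 0 := by
  rw [psComp_coeff]
  apply Finset.sum_eq_zero
  intro k hk
  simp only [Finset.mem_range] at hk
  rcases Nat.eq_zero_or_pos k with hk0 | hk0
  · subst hk0
    simp [coeff_one, hs.ne']
  · rw [hm k hk0 (by omega), zero_mul]

lemma psComp_coeff_m (H f : PowerSeries ℝ) (hf0 : constantCoeff f = 0) (m : ℕ) (hm0 : 0 < m)
    (hm : ∀ s, 0 < s → s < m → coeff s H = 0) :
    coeff m (psComp H f) = coeff m H * (coeff 1 f) ^ m := by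
  rw [psComp_coeff, Finset.sum_range_succ]
  have hlow : ∑ k ∈ Finset.range m, coeff k H * coeff m (f ^ k) = 0 := by
    apply Finset.sum_eq_zero
    intro k hk
    simp only [Finset.mem_range] at hk
    rcases Nat.eq_zero_or_pos k with hk0 | hk0
    · subst hk0
      simp [coeff_one, hm0.ne']
    · rw [hm k hk0 hk, zero_mul]
  rw [hlow, coeff_pow_self_s12 f hf0, zero_add]

lemma main_step (H : PowerSeries ℝ) (hH0 : constantCoeff H = 1)
    (f : PowerSeries ℝ) (hf0 : constantCoeff f = 0)
    (m : ℕ) (hm0 : 0 < m) (hm : ∀ s, 0 < s → s < m → coeff s H = 0)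
    (φ : PowerSeries ℝ) (j : ℕ) (hj : 0 < j)
    (hlow : ∀ k, k < j → coeff k φ = 0)
    (heq : psComp φ (X * H) = φ * psComp H f) :
    coeff j φ * (coeff m H * ((j : ℝ) - (coeff 1 f) ^ m)) = 0 := by
  set n := j + m with hn
  have hXH : constantCoeff (X * H : PowerSeries ℝ) = 0 := by
    simp
  have hcoe := congrArg (coeff n) heq
  rw [psComp_coeff, coeff_mul, Finset.Nat.sum_antidiagonal_eq_sum_range_succ_mk] at hcoe
  have hsum : ∑ k ∈ Finset.range (n + 1),
      (coeff k φ * coeff n ((X * H) ^ k) - coeff k φ * coeff (n - k) (psComp H f)) = 0 := by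
    rw [Finset.sum_sub_distrib, hcoe, sub_self]
  have hXHk : ∀ k, k ≤ n → coeff n ((X * H) ^ k) = coeff (n - k) (H ^ k) := by
    intro k hk
    rw [mul_pow, coeff_X_pow_mul', if_pos hk]
  rw [Finset.sum_eq_single j] at hsum
  · rw [hXHk j (by omega)] at hsum
    have h1 : n - j = m := by omega
    rw [h1, coeff_pow_m H hH0 m hm0 hm j,
      psComp_coeff_m H f hf0 m hm0 hm] at hsum
    linarith [hsum]
  · intro k hk hkj
    simp only [Finset.mem_range] at hk
    rcases lt_or_gt_of_ne hkj with hlt | hgt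
    · rw [hlow k hlt, zero_mul, zero_mul, sub_self]
    · rcases Nat.lt_or_ge k n with hkn | hkn
      · have h2 : 0 < n - k := by omega
        have h3 : n - k < m := by omega
        rw [hXHk k (by omega), coeff_pow_lt H m hm k _ h2 h3,
          psComp_coeff_lt H f m hm _ h2 h3]
        simp
      · have hkeq : k = n := by omega
        rw [hkeq, hXHk n le_rfl, Nat.sub_self, psComp_coeff_zero H f hH0,
          coeff_zero_eq_constantCoeff, map_pow, hH0, one_pow, sub_self]
  · intro hjn
    exact absurd (Finset.mem_range.mpr (by omega)) hjn

lemma psComp_lin (c c' : ℝ) (a a' b : PowerSeries ℝ) :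
    psComp (C c * a - C c' * a') b = C c * psComp a b - C c' * psComp a' b := by
  ext n
  simp only [map_sub, coeff_C_mul, psComp_coeff, Finset.mul_sum, Finset.sum_sub_distrib]
  rw [← Finset.sum_sub_distrib]
  exact Finset.sum_congr rfl fun k _ => by ring

theorem stmt12 (H : PowerSeries ℝ) (hH0 : constantCoeff H = 1)
    (h : PowerSeries ℝ) (hh : h = X * H) (hhX : h ≠ X)
    (f g : PowerSeries ℝ)
    (hf0 : constantCoeff f = 0) (hf1 : coeff 1 f ≠ 0)
    (hg0 : constantCoeff g ≠ 0)
    (hcomm1 : psComp f h = psComp h f)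
    (hcomm2 : g * psComp H f = H * psComp g h) :
    ∃ c : ℝ, c ≠ 0 ∧ X * g = C c * f := by
  subst hh
  have hXH : constantCoeff (X * H : PowerSeries ℝ) = 0 := by simp
  -- find the minimal positive index where H has a nonzero coefficient
  have hHne : H ≠ 1 := by
    intro h1
    apply hhX
    rw [h1, mul_one]
  have hex : ∃ s, 0 < s ∧ coeff s H ≠ 0 := by
    by_contra hc
    push_neg at hc
    apply hHne
    ext s
    rcases Nat.eq_zero_or_pos s with hs | hs
    · subst hs
      simp [coeff_zero_eq_constantCoeff, hH0]
    · rw [hc s hs, coeff_one, if_neg hs.ne']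
  set m := Nat.find hex with hmdef
  obtain ⟨hm0, hHm⟩ := Nat.find_spec hex
  have hm : ∀ s, 0 < s → s < m → coeff s H = 0 := by
    intro s hs hsm
    have := Nat.find_min hex hsm
    push_neg at this
    exact this hs
  -- the two functional equations
  have hfE : psComp f (X * H) = f * psComp H f := by
    rw [hcomm1, psComp_X_mul H f hf0]
  have huE : psComp (X * g) (X * H) = (X * g) * psComp H f := by
    rw [psComp_X_mul g (X * H) hXH, mul_assoc, ← hcomm2, mul_comm (X : PowerSeries ℝ) g,
      mul_assoc]
    ring
  -- f₁ ^ m = 1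
  have hf1m : (coeff 1 f) ^ m = 1 := by
    have := main_step H hH0 f hf0 m hm0 hm f 1 one_pos
      (by intro k hk
          interval_cases k
          rw [coeff_zero_eq_constantCoeff]; exact hf0) hfE
    rw [Nat.cast_one] at this
    have h2 : coeff m H * ((1 : ℝ) - (coeff 1 f) ^ m) = 0 :=
      (mul_eq_zero.mp this).resolve_left hf1
    have h3 : (1 : ℝ) - (coeff 1 f) ^ m = 0 :=
      (mul_eq_zero.mp h2).resolve_left hHm
    linarith
  -- the difference series
  set w : PowerSeries ℝ := C (constantCoeff g) * f - C (coeff 1 f) * (X * g) with hwdef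
  have hwE : psComp w (X * H) = w * psComp H f := by
    rw [hwdef, psComp_lin, hfE, huE]
    ring
  have hw0 : coeff 0 w = 0 := by
    simp [hwdef, coeff_C_mul, coeff_zero_eq_constantCoeff, hf0]
  have hw1 : coeff 1 w = 0 := by
    have : coeff 1 (X * g) = constantCoeff g := by
      rw [show (1 : ℕ) = 0 + 1 from rfl, coeff_succ_X_mul, coeff_zero_eq_constantCoeff]
    simp [hwdef, coeff_C_mul, this]
    ring
  have hwall : ∀ j, coeff j w = 0 := by
    intro j
    induction j using Nat.strong_induction_on with
    | _ j ih =>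
      rcases Nat.lt_or_ge j 2 with hj2 | hj2
      · interval_cases j
        · exact hw0
        · exact hw1
      · have := main_step H hH0 f hf0 m hm0 hm w j (by omega) (fun k hk => ih k hk) hwE
        rw [hf1m] at this
        have hj1 : ((j : ℝ) - 1) ≠ 0 := by
          have : (2 : ℝ) ≤ (j : ℝ) := by exact_mod_cast hj2
          linarith
        rcases mul_eq_zero.mp this with h1 | h1
        · exact h1
        · exact absurd h1 (mul_ne_zero hHm hj1)
  have hz : C (constantCoeff g) * f - C (coeff 1 f) * (X * g) = 0 := by
    rw [← hwdef]
    ext n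
    rw [hwall n, map_zero]
  have hweq : C (coeff 1 f) * (X * g) = C (constantCoeff g) * f :=
    (sub_eq_zero.mp hz).symm
  refine ⟨(coeff 1 f)⁻¹ * constantCoeff g, mul_ne_zero (inv_ne_zero hf1) hg0, ?_⟩
  have hfin := congrArg (fun z => C (coeff 1 f)⁻¹ * z) hweq
  rw [← mul_assoc, ← map_mul, inv_mul_cancel₀ hf1, map_one, one_mul] at hfin
  rw [hfin, ← mul_assoc, ← map_mul]
end
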